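/- Suppose a ∉ atms(s') ∪ atms(l) and Δ ⊢ s' ≈α lσ. Then there exists a substitution σ' such that for all X ∈ unkn(l): Δ ⊢ σ(X) ≈α σ'(X) and a ∉ atms(σ'(X)). -/

import Mathlib

/-! Nominal terms: atoms, permutations, terms, actions, freshness, α-equivalence,
nominal rewriting and nominal algebra, closed rewriting. -/

abbrev Atom := ℕ
abbrev Unknown := ℕ

/-- Finitely supported permutations of atoms. -/
def FinPerm := {π : Equiv.Perm Atom // {a | π a ≠ a}.Finite}

namespace FinPerm

instance : CoeFun FinPerm (fun _ => Atom → Atom) := ⟨fun π => π.1⟩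

def id : FinPerm := ⟨Equiv.refl Atom, by simp⟩

/-- `comp π π'` is `π ∘ π'` (first apply `π'`, then `π`). -/
def comp (π π' : FinPerm) : FinPerm :=
  ⟨π'.1.trans π.1, ((π.2.union π'.2).subset (by
    intro a ha
    simp only [Set.mem_setOf_eq, Equiv.trans_apply] at ha
    by_cases h : π'.1 a = a
    · exact Or.inl (by simpa [h] using ha)
    · exact Or.inr h))⟩

def inv (π : FinPerm) : FinPerm :=
  ⟨π.1.symm, π.2.subset (by
    intro a ha h
    exact ha (π.1.symm_apply_eq.mpr h.symm))⟩

def swap (a b : Atom) : FinPerm :=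
  ⟨Equiv.swap a b, (Set.toFinite {a, b}).subset (by
    intro c hc
    by_contra h
    simp only [Set.mem_insert_iff, Set.mem_singleton_iff, not_or] at h
    exact hc (Equiv.swap_apply_of_ne_of_ne h.1 h.2))⟩

/-- The (finite) set of atoms moved by `π`. -/
noncomputable def nontriv (π : FinPerm) : Finset Atom := π.2.toFinset

end FinPerm

/-- Nominal terms: atoms, moderated unknowns `π·X`, abstractions `[a]t`,
and term-formers applied to lists of arguments. -/
inductive Term : Type where
  | atom : Atom → Term
  | var  : FinPerm → Unknown → Term
  | abs  : Atom → Term → Term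
  | app  : ℕ → List Term → Term

/-- Permutation action on terms. -/
def permAct (π : FinPerm) : Term → Term
  | .atom a => .atom (π a)
  | .var π' X => .var (π.comp π') X
  | .abs a t => .abs (π a) (permAct π t)
  | .app f ts => .app f (ts.attach.map fun t => permAct π t.1)
decreasing_by
  all_goals simp_wf
  have := List.sizeOf_lt_of_mem t.2
  omega

/-- Substitutions, represented as total maps (the default value of `X` is `id·X`). -/
def Subst := Unknown → Term

/-- A substitution has finite domain. -/
def Subst.FinDom (σ : Subst) : Prop := {X | σ X ≠ .var FinPerm.id X}.Finite

/-- Substitution action on terms. -/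
def subst (σ : Subst) : Term → Term
  | .atom a => .atom a
  | .var π X => permAct π (σ X)
  | .abs a t => .abs a (subst σ t)
  | .app f ts => .app f (ts.attach.map fun t => subst σ t.1)
decreasing_by
  all_goals simp_wf
  have := List.sizeOf_lt_of_mem t.2
  omega

/-- Composition of substitutions: `(σ.comp θ) X = (Xσ)θ`. -/
def Subst.comp (σ θ : Subst) : Subst := fun X => subst θ (σ X)

/-- `σ∘π`, mapping `X` to `π·(σ X)`. -/
def Subst.permComp (σ : Subst) (π : FinPerm) : Subst := fun X => permAct π (σ X)

mutual
/-- Atoms occurring in a term. -/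
noncomputable def atmsF : Term → Finset Atom
  | .atom a => {a}
  | .var π _ => π.nontriv
  | .abs a t => insert a (atmsF t)
  | .app _ ts => atmsLF ts
noncomputable def atmsLF : List Term → Finset Atom
  | [] => ∅
  | t :: ts => atmsF t ∪ atmsLF ts
end

mutual
/-- Unknowns occurring in a term. -/
def unknF : Term → Finset Unknown
  | .atom _ => ∅
  | .var _ X => {X}
  | .abs _ t => unknF t
  | .app _ ts => unknLF ts
def unknLF : List Term → Finset Unknown
  | [] => ∅
  | t :: ts => unknF t ∪ unknLF ts
end

/-- Freshness contexts: finite sets of primitive constraints `a#X`. -/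
abbrev Ctx := Finset (Atom × Unknown)

def ctxAtoms (Δ : Ctx) : Finset Atom := Δ.image Prod.fst
def ctxUnkns (Δ : Ctx) : Finset Unknown := Δ.image Prod.snd

/-- Derivable freshness judgements `Δ ⊢ a # t`. -/
inductive Fresh (Δ : Ctx) : Atom → Term → Prop where
  | atom {a b} : a ≠ b → Fresh Δ a (.atom b)
  | var {a π X} : (π.inv a, X) ∈ Δ → Fresh Δ a (.var π X)
  | absSame {a t} : Fresh Δ a (.abs a t)
  | absDiff {a b t} : a ≠ b → Fresh Δ a t → Fresh Δ a (.abs b t)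
  | app {a f ts} : (∀ t ∈ ts, Fresh Δ a t) → Fresh Δ a (.app f ts)

/-- Derivable α-equivalence judgements `Δ ⊢ s ≈α t`. -/
inductive Aeq (Δ : Ctx) : Term → Term → Prop where
  | atom {a} : Aeq Δ (.atom a) (.atom a)
  | var {π π' : FinPerm} {X : Unknown} : (∀ a : Atom, (π : Atom → Atom) a ≠ (π' : Atom → Atom) a → (a, X) ∈ Δ) →
      Aeq Δ (.var π X) (.var π' X)
  | absSame {a t u} : Aeq Δ t u → Aeq Δ (.abs a t) (.abs a u)
  | absDiff {a b t u} : a ≠ b → Fresh Δ b t → Aeq Δ (permAct (FinPerm.swap b a) t) u →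
      Aeq Δ (.abs a t) (.abs b u)
  | app {f ts us} : ts.length = us.length → (∀ p ∈ ts.zip us, Aeq Δ p.1 p.2) →
      Aeq Δ (.app f ts) (.app f us)

/-- Subterm relation. -/
inductive Subterm : Term → Term → Prop where
  | refl (t) : Subterm t t
  | abs {s t a} : Subterm s t → Subterm s (.abs a t)
  | app {s t f ts} : t ∈ ts → Subterm s t → Subterm s (.app f ts)

mutual
/-- Number of occurrences of the unknown `X` in a term. -/
def countUnk (X : Unknown) : Term → ℕ
  | .atom _ => 0
  | .var _ Y => if Y = X then 1 else 0
  | .abs _ t => countUnk X t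
  | .app _ ts => countUnkL X ts
def countUnkL (X : Unknown) : List Term → ℕ
  | [] => 0
  | t :: ts => countUnk X t + countUnkL X ts
end

/-- A position: a term with a distinguished unknown occurring exactly once, as `id·X`. -/
structure Position where
  ctx : Term
  hole : Unknown
  once : countUnk hole ctx = 1
  idOnly : ∀ π : FinPerm, Subterm (.var π hole) ctx → π = FinPerm.id

def fillAux (X : Unknown) (u : Term) : Term → Term
  | .atom a => .atom a
  | .var π Y => if Y = X then u else .var π Y
  | .abs a t => .abs a (fillAux X u t)
  | .app f ts => .app f (ts.attach.map fun t => fillAux X u t.1)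
decreasing_by
  all_goals simp_wf
  have := List.sizeOf_lt_of_mem t.2
  omega

/-- `C[u]`: place `u` in the hole of the position `C`. -/
def Position.fill (C : Position) (u : Term) : Term := fillAux C.hole u C.ctx

/-- A rule `∇ ⊢ l → r` (also used for axioms `∇ ⊢ l = r`). -/
structure Rule where
  ctx : Ctx
  lhs : Term
  rhs : Term

noncomputable def Rule.atms (R : Rule) : Finset Atom := ctxAtoms R.ctx ∪ atmsF R.lhs ∪ atmsF R.rhs
def Rule.unkn (R : Rule) : Finset Unknown := ctxUnkns R.ctx ∪ unknF R.lhs ∪ unknF R.rhs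

/-- `Δ ⊢ ∇θ`: every constraint of `∇`, instantiated by `θ`, is derivable from `Δ`. -/
def FreshSubst (Δ N : Ctx) (θ : Subst) : Prop :=
  ∀ p ∈ N, Fresh Δ p.1 (subst θ (.var FinPerm.id p.2))

/-- One-step nominal rewriting with the rule `R` in context `Δ`. -/
def OneStepR (R : Rule) (Δ : Ctx) (s t : Term) : Prop :=
  ∃ (C : Position) (s' : Term) (π : FinPerm) (θ : Subst),
    s = C.fill s' ∧ FreshSubst Δ R.ctx θ ∧
    Aeq Δ s' (permAct π (subst θ R.lhs)) ∧
    Aeq Δ (C.fill (permAct π (subst θ R.rhs))) t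

def OneStep (Rw : Set Rule) (Δ : Ctx) (s t : Term) : Prop := ∃ R ∈ Rw, OneStepR R Δ s t

/-- `Δ ⊢_R s ↔* t`: the reflexive-symmetric-transitive closure, including
α-equivalence, of one-step rewriting. -/
inductive RewEq (Rw : Set Rule) (Δ : Ctx) : Term → Term → Prop where
  | step {s t} : OneStep Rw Δ s t → RewEq Rw Δ s t
  | alpha {s t} : Aeq Δ s t → RewEq Rw Δ s t
  | symm {s t} : RewEq Rw Δ s t → RewEq Rw Δ t s
  | trans {s t u} : RewEq Rw Δ s t → RewEq Rw Δ t u → RewEq Rw Δ s u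

/-- Atoms of a judgement `(Δ, s, t)`. -/
noncomputable def judgeAtms (Δ : Ctx) (s t : Term) : Finset Atom := ctxAtoms Δ ∪ atmsF s ∪ atmsF t

def judgeUnkn (Δ : Ctx) (s t : Term) : Finset Unknown := ctxUnkns Δ ∪ unknF s ∪ unknF t

/-- `Γ` is a fresh context for a set of atoms `A`: its atoms avoid `A`. -/
def FreshFor (Γ : Ctx) (A : Finset Atom) : Prop := ∀ p ∈ Γ, p.1 ∉ A

/-- Nominal algebra equality `Δ ⊢_T s = t`. -/
inductive AlgEq (T : Set Rule) (Δ : Ctx) : Term → Term → Prop where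
  | axm {s t} (R : Rule) (hR : R ∈ T) (Γ : Ctx) (C : Position) (π : FinPerm) (θ : Subst) :
      FreshFor Γ (judgeAtms Δ s t) →
      FreshSubst (Δ ∪ Γ) R.ctx θ →
      Aeq (Δ ∪ Γ) s (C.fill (permAct π (subst θ R.lhs))) →
      Aeq (Δ ∪ Γ) (C.fill (permAct π (subst θ R.rhs))) t →
      AlgEq T Δ s t
  | refl (s) : AlgEq T Δ s s
  | symm {s t} : AlgEq T Δ s t → AlgEq T Δ t s
  | trans {s t u} : AlgEq T Δ s t → AlgEq T Δ t u → AlgEq T Δ s u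

/-- `Rw` is a presentation of the equational theory `T`. -/
def Presents (Rw : Set Rule) (T : Set Rule) : Prop :=
  ∀ R : Rule, R ∈ T ↔ (R ∈ Rw ∨ Rule.mk R.ctx R.rhs R.lhs ∈ Rw)

/-- Structural renaming of atoms (by a permutation `τ`) and unknowns (by `ρ`). -/
def renameT (τ : FinPerm) (ρ : Unknown → Unknown) : Term → Term
  | .atom a => .atom (τ a)
  | .var π X => .var (τ.comp (π.comp τ.inv)) (ρ X)
  | .abs a t => .abs (τ a) (renameT τ ρ t)
  | .app f ts => .app f (ts.attach.map fun t => renameT τ ρ t.1)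
decreasing_by
  all_goals simp_wf
  have := List.sizeOf_lt_of_mem t.2
  omega

def renameCtx (τ : FinPerm) (ρ : Unknown → Unknown) (Δ : Ctx) : Ctx :=
  Δ.image (fun p => (τ p.1, ρ p.2))

def Rule.rename (τ : FinPerm) (ρ : Unknown → Unknown) (R : Rule) : Rule :=
  ⟨renameCtx τ ρ R.ctx, renameT τ ρ R.lhs, renameT τ ρ R.rhs⟩

/-- `R'` is a freshened variant of `R`, avoiding also the atoms `A` and unknowns `U`. -/
def FreshenedVariant (A : Finset Atom) (U : Finset Unknown) (R R' : Rule) : Prop :=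
  ∃ (τ : FinPerm) (ρ : Equiv.Perm Unknown),
    R' = R.rename τ ρ ∧
    (∀ a ∈ R.atms, τ a ∉ A ∪ R.atms) ∧
    (∀ X ∈ R.unkn, (ρ X) ∉ U ∪ R.unkn)

/-- A rule (or axiom) `∇ ⊢ l → r` is closed: a freshened variant of `∇ ⊢ (l,r)` matches
`∇ ⊢ (l,r)` in the context `∇` extended with `atms(R') # unkn(R)`. -/
def Rule.Closed (R : Rule) : Prop :=
  ∃ R' : Rule, FreshenedVariant ∅ ∅ R R' ∧
    ∃ σ : Subst, (∀ X, X ∉ R'.unkn → σ X = .var FinPerm.id X) ∧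
      FreshSubst (R.ctx ∪ R'.atms ×ˢ R.unkn) R'.ctx σ ∧
      Aeq (R.ctx ∪ R'.atms ×ˢ R.unkn) (subst σ R'.lhs) R.lhs ∧
      Aeq (R.ctx ∪ R'.atms ×ˢ R.unkn) (subst σ R'.rhs) R.rhs

/-- One-step closed rewriting `Δ ⊢ s →c_R t`. -/
def ClosedStepR (R : Rule) (Δ : Ctx) (s t : Term) : Prop :=
  ∃ R' : Rule, FreshenedVariant (judgeAtms Δ s t ∪ R.atms) (judgeUnkn Δ s t ∪ R.unkn) R R' ∧
    ∃ (C : Position) (s' : Term) (θ : Subst),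
      s = C.fill s' ∧
      FreshSubst (Δ ∪ R'.atms ×ˢ judgeUnkn Δ s t) R'.ctx θ ∧
      Aeq (Δ ∪ R'.atms ×ˢ judgeUnkn Δ s t) s' (subst θ R'.lhs) ∧
      Aeq (Δ ∪ R'.atms ×ˢ judgeUnkn Δ s t) (C.fill (subst θ R'.rhs)) t

def ClosedStep (Rw : Set Rule) (Δ : Ctx) (s t : Term) : Prop := ∃ R ∈ Rw, ClosedStepR R Δ s t

/-- `Δ ⊢_R s ↔c* t`: reflexive-symmetric-transitive closure, including α-equivalence,
of one-step closed rewriting. -/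
inductive ClosedRewEq (Rw : Set Rule) (Δ : Ctx) : Term → Term → Prop where
  | step {s t} : ClosedStep Rw Δ s t → ClosedRewEq Rw Δ s t
  | alpha {s t} : Aeq Δ s t → ClosedRewEq Rw Δ s t
  | symm {s t} : ClosedRewEq Rw Δ s t → ClosedRewEq Rw Δ t s
  | trans {s t u} : ClosedRewEq Rw Δ s t → ClosedRewEq Rw Δ t u → ClosedRewEq Rw Δ s u

-- FinPerm basics
namespace FinPerm
@[ext] theorem ext' {π π' : FinPerm} (h : ∀ a, (π : Atom → Atom) a = π' a) : π = π' :=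
  Subtype.ext (Equiv.ext h)
@[simp] theorem comp_apply (π π' : FinPerm) (a : Atom) : (π.comp π') a = π (π' a) := rfl
@[simp] theorem id_apply (a : Atom) : (FinPerm.id) a = a := rfl
@[simp] theorem swap_apply (b c a : Atom) : (FinPerm.swap b c) a = Equiv.swap b c a := rfl
@[simp] theorem inv_apply_self (π : FinPerm) (a : Atom) : π.inv (π a) = a := π.1.symm_apply_apply a
@[simp] theorem apply_inv_self (π : FinPerm) (a : Atom) : π (π.inv a) = a := π.1.apply_symm_apply a
theorem injective (π : FinPerm) : Function.Injective (π : Atom → Atom) := π.1.injective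
theorem mem_nontriv {π : FinPerm} {a : Atom} : a ∈ π.nontriv ↔ π a ≠ a := by
  simp [nontriv, Set.Finite.mem_toFinset]
theorem inv_comp_self (π : FinPerm) : π.inv.comp π = FinPerm.id := by ext a; simp
theorem swap_conj (π : FinPerm) (b c : Atom) :
    (FinPerm.swap (π b) (π c)).comp π = π.comp (FinPerm.swap b c) := by
  ext a; simp [Equiv.swap_apply_def, π.injective.eq_iff]; split <;> [skip; split] <;> simp
theorem swap_comm (b c : Atom) : FinPerm.swap b c = FinPerm.swap c b := by
  ext a; simp [Equiv.swap_comm]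
theorem swap_comp_self (b c : Atom) : (FinPerm.swap b c).comp (FinPerm.swap b c) = FinPerm.id := by
  ext a; simp
theorem inv_a_eq {π : FinPerm} {a : Atom} (h : π a = a) : π.inv a = a := by
  conv_lhs => rw [← h]; simp
end FinPerm
@[simp] theorem FinPerm.id_comp (π : FinPerm) : FinPerm.id.comp π = π := by ext a; simp
@[simp] theorem FinPerm.comp_id (π : FinPerm) : π.comp FinPerm.id = π := by ext a; simp
theorem FinPerm.comp_assoc (π₁ π₂ π₃ : FinPerm) :
    (π₁.comp π₂).comp π₃ = π₁.comp (π₂.comp π₃) := by ext a; simp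

-- permAct / subst simp equations
@[simp] theorem permAct_atom (π : FinPerm) (b : Atom) : permAct π (.atom b) = .atom (π b) := by
  simp [permAct]
@[simp] theorem permAct_var (π π' : FinPerm) (X : Unknown) :
    permAct π (.var π' X) = .var (π.comp π') X := by simp [permAct]
@[simp] theorem permAct_abs (π : FinPerm) (b : Atom) (t : Term) :
    permAct π (.abs b t) = .abs (π b) (permAct π t) := by simp [permAct]
@[simp] theorem permAct_app (π : FinPerm) (f : ℕ) (ts : List Term) :
    permAct π (.app f ts) = .app f (ts.map (permAct π)) := by
  rw [permAct]; simp [List.map_attach_eq_pmap]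
@[simp] theorem subst_atom (σ : Subst) (b : Atom) : subst σ (.atom b) = .atom b := by simp [subst]
@[simp] theorem subst_var (σ : Subst) (π : FinPerm) (X : Unknown) :
    subst σ (.var π X) = permAct π (σ X) := by simp [subst]
@[simp] theorem subst_abs (σ : Subst) (b : Atom) (t : Term) :
    subst σ (.abs b t) = .abs b (subst σ t) := by simp [subst]
@[simp] theorem subst_app (σ : Subst) (f : ℕ) (ts : List Term) :
    subst σ (.app f ts) = .app f (ts.map (subst σ)) := by
  rw [subst]; simp [List.map_attach_eq_pmap]

-- custom induction principle
theorem Term.my_ind {P : Term → Prop}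
    (hatom : ∀ b, P (.atom b)) (hvar : ∀ π X, P (.var π X))
    (habs : ∀ b t, P t → P (.abs b t))
    (happ : ∀ f ts, (∀ t ∈ ts, P t) → P (.app f ts)) : ∀ t, P t
  | .atom b => hatom b
  | .var π X => hvar π X
  | .abs b t => habs b t (Term.my_ind hatom hvar habs happ t)
  | .app f ts => happ f ts (fun t ht => Term.my_ind hatom hvar habs happ t)
decreasing_by
  all_goals simp_wf
  all_goals first
    | omega
    | (have := List.sizeOf_lt_of_mem ht; omega)

theorem permAct_comp (π π' : FinPerm) (t : Term) :
    permAct π (permAct π' t) = permAct (π.comp π') t := by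
  induction t using Term.my_ind with
  | hatom b => simp
  | hvar π'' X => simp [FinPerm.comp_assoc]
  | habs b t ih => simp [ih]
  | happ f ts ih => simp; intro t ht; exact ih t ht

@[simp] theorem permAct_id (t : Term) : permAct FinPerm.id t = t := by
  induction t using Term.my_ind with
  | hatom b => simp
  | hvar π X => simp
  | habs b t ih => simp [ih]
  | happ f ts ih => simp; exact (List.map_congr_left ih).trans (List.map_id _)

theorem permAct_inv_cancel (π : FinPerm) (t : Term) : permAct π.inv (permAct π t) = t := by
  rw [permAct_comp, FinPerm.inv_comp_self, permAct_id]

theorem subst_permAct (σ : Subst) (π : FinPerm) (t : Term) :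
    subst σ (permAct π t) = permAct π (subst σ t) := by
  induction t using Term.my_ind with
  | hatom b => simp
  | hvar π' X => simp [permAct_comp]
  | habs b t ih => simp [ih]
  | happ f ts ih => simp [Function.comp]; exact fun t ht => ih t ht

@[simp] theorem atmsF_atom (b : Atom) : atmsF (.atom b) = {b} := by rw [atmsF]
@[simp] theorem atmsF_var (π : FinPerm) (X : Unknown) : atmsF (.var π X) = π.nontriv := by rw [atmsF]
@[simp] theorem atmsF_abs (b : Atom) (t : Term) : atmsF (.abs b t) = insert b (atmsF t) := by rw [atmsF]
@[simp] theorem atmsF_app (f : ℕ) (ts : List Term) : atmsF (.app f ts) = atmsLF ts := by rw [atmsF]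
@[simp] theorem atmsLF_nil : atmsLF [] = ∅ := by rw [atmsLF]
@[simp] theorem atmsLF_cons (t : Term) (ts : List Term) : atmsLF (t :: ts) = atmsF t ∪ atmsLF ts := by rw [atmsLF]
@[simp] theorem unknF_atom (b : Atom) : unknF (.atom b) = ∅ := by rw [unknF]
@[simp] theorem unknF_var (π : FinPerm) (X : Unknown) : unknF (.var π X) = {X} := by rw [unknF]
@[simp] theorem unknF_abs (b : Atom) (t : Term) : unknF (.abs b t) = unknF t := by rw [unknF]
@[simp] theorem unknF_app (f : ℕ) (ts : List Term) : unknF (.app f ts) = unknLF ts := by rw [unknF]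
@[simp] theorem unknLF_nil : unknLF [] = ∅ := by rw [unknLF]
@[simp] theorem unknLF_cons (t : Term) (ts : List Term) : unknLF (t :: ts) = unknF t ∪ unknLF ts := by rw [unknLF]

theorem mem_atmsLF {b : Atom} {ts : List Term} :
    b ∈ atmsLF ts ↔ ∃ t ∈ ts, b ∈ atmsF t := by
  induction ts with
  | nil => simp
  | cons t ts ih => simp [ih]

theorem mem_unknLF {X : Unknown} {ts : List Term} :
    X ∈ unknLF ts ↔ ∃ t ∈ ts, X ∈ unknF t := by
  induction ts with
  | nil => simp
  | cons t ts ih => simp [ih]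

theorem unknF_permAct (π : FinPerm) (t : Term) : unknF (permAct π t) = unknF t := by
  induction t using Term.my_ind with
  | hatom b => simp
  | hvar π' X => simp
  | habs b t ih => simp [ih]
  | happ f ts ih =>
    simp only [permAct_app, unknF_app]
    induction ts with
    | nil => simp
    | cons t ts ih2 =>
      simp only [List.map_cons, unknLF_cons, ih t (by simp)]
      rw [ih2 (fun u hu => ih u (by simp [hu]))]

theorem atmsF_permAct_not {a : Atom} (π : FinPerm) (hπ : (π : Atom → Atom) a = a) :
    ∀ {t : Term}, a ∉ atmsF t → a ∉ atmsF (permAct π t) := by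
  intro t
  induction t using Term.my_ind with
  | hatom b => simp; intro h h2; subst h2; exact h (π.injective hπ)
  | hvar π' X =>
    simp [FinPerm.mem_nontriv]
    intro h
    simp [h, hπ]
  | habs b t ih =>
    simp; intro hb ht
    refine ⟨fun h => hb ?_, ih ht⟩
    subst h; exact π.injective hπ
  | happ f ts ih =>
    simp only [permAct_app, atmsF_app, mem_atmsLF]
    intro h hc
    obtain ⟨u, hu, hau⟩ := hc
    simp only [List.mem_map] at hu
    obtain ⟨t, ht, rfl⟩ := hu
    exact ih t ht (fun h2 => h ⟨t, ht, h2⟩) hau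

theorem FinPerm.comp_inv_apply (π π' : FinPerm) (a : Atom) :
    (π.comp π').inv a = π'.inv (π.inv a) := rfl

theorem Fresh.perm {Δ : Ctx} {b : Atom} {t : Term} (h : Fresh Δ b t) (π : FinPerm) :
    Fresh Δ (π b) (permAct π t) := by
  induction h with
  | @atom c hne =>
    simpa using Fresh.atom (Δ := Δ) (fun h => hne (π.injective h))
  | @var π' X hmem =>
    simp only [permAct_var]
    exact Fresh.var (by rw [FinPerm.comp_inv_apply, FinPerm.inv_apply_self]; exact hmem)
  | absSame => simpa using Fresh.absSame
  | @absDiff c t hne _ ih =>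
    simp only [permAct_abs]
    exact Fresh.absDiff (fun h => hne (π.injective h)) ih
  | @app f ts _ ih =>
    simp only [permAct_app]
    exact Fresh.app (by
      intro u hu
      obtain ⟨t, ht, rfl⟩ := List.mem_map.mp hu
      exact ih t ht)

theorem Aeq.perm {Δ : Ctx} {s t : Term} (h : Aeq Δ s t) (π : FinPerm) :
    Aeq Δ (permAct π s) (permAct π t) := by
  induction h with
  | atom => simp; exact Aeq.atom
  | @var π₁ π₂ X hΔ =>
    simp only [permAct_var]
    exact Aeq.var (fun c hc => hΔ c (fun h => hc (by simp [h])))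
  | absSame _ ih => simp only [permAct_abs]; exact Aeq.absSame ih
  | @absDiff b c t u hne hf _ ih =>
    simp only [permAct_abs]
    refine Aeq.absDiff (fun h => hne (π.injective h)) (hf.perm π) ?_
    rw [permAct_comp, FinPerm.swap_conj, ← permAct_comp]
    exact ih
  | @app f ts us hlen hall ih =>
    simp only [permAct_app]
    refine Aeq.app (by simp [hlen]) ?_
    intro p hp
    rw [List.zip_map] at hp
    obtain ⟨q, hq, rfl⟩ := List.mem_map.mp hp
    exact ih q hq

theorem Fresh.of_aeq {Δ : Ctx} {c : Atom} {s t : Term} (h : Aeq Δ s t) (hf : Fresh Δ c s) :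
    Fresh Δ c t := by
  induction h with
  | atom => exact hf
  | @var π₁ π₂ X hΔ =>
    cases hf with
    | var hmem =>
      refine Fresh.var ?_
      by_cases hd : π₂.inv c = π₁.inv c
      · rw [hd]; exact hmem
      · refine hΔ (π₂.inv c) (fun h => hd ?_)
        have hc : (π₁ : Atom → Atom) (π₂.inv c) = c := by rw [h]; simp
        calc (π₂.inv c : Atom) = π₁.inv (π₁ (π₂.inv c)) := by simp
          _ = π₁.inv c := by rw [hc]
  | @absSame b t u _ ih =>
    cases hf with
    | absSame => exact Fresh.absSame
    | absDiff hne hft => exact Fresh.absDiff hne (ih hft)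
  | @absDiff b d t u hne hfd _ ih =>
    by_cases hcd : c = d
    · subst hcd; exact Fresh.absSame
    cases hf with
    | absSame =>
      refine Fresh.absDiff hcd (ih ?_)
      have := hfd.perm (FinPerm.swap d c)
      simpa using this
    | absDiff hcb hft =>
      refine Fresh.absDiff hcd (ih ?_)
      have := hft.perm (FinPerm.swap d b)
      rwa [show (FinPerm.swap d b) c = c by
        simp [Equiv.swap_apply_of_ne_of_ne hcd hcb]] at this
  | @app f ts us hlen hall ih =>
    cases hf with
    | app hts =>
      refine Fresh.app ?_
      intro u hu
      obtain ⟨i, hi, rfl⟩ := List.mem_iff_getElem.mp hu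
      have hi' : i < ts.length := by omega
      have hpz : (ts[i], us[i]) ∈ ts.zip us := by
        have : (ts.zip us)[i]'(by simp [hlen]; omega) = (ts[i], us[i]) := by
          simp
        rw [← this]; exact List.getElem_mem _
      exact ih _ hpz (hts _ (List.getElem_mem hi'))

theorem Aeq.symm' {Δ : Ctx} {s t : Term} (h : Aeq Δ s t) : Aeq Δ t s := by
  induction h with
  | atom => exact Aeq.atom
  | var hΔ => exact Aeq.var (fun c hc => hΔ c (Ne.symm hc))
  | absSame _ ih => exact Aeq.absSame ih
  | @absDiff b c t u hne hf h ih =>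
    refine Aeq.absDiff (Ne.symm hne) (Fresh.of_aeq h (by simpa using hf.perm (FinPerm.swap c b))) ?_
    have := ih.perm (FinPerm.swap b c)
    rwa [permAct_comp, FinPerm.swap_comm c b, FinPerm.swap_comp_self, permAct_id] at this
  | @app f ts us hlen hall ih =>
    refine Aeq.app hlen.symm ?_
    intro p hp
    have : p.swap ∈ ts.zip us := by
      rw [← List.zip_swap]
      exact List.mem_map_of_mem hp
    exact ih _ this

theorem main_lemma (Δ : Ctx) (a : Atom) : (l : Term) → ∀ (σ : Subst) (s' : Term),
    Aeq Δ s' (subst σ l) → a ∉ atmsF s' → a ∉ atmsF l →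
    ∀ X ∈ unknF l, ∃ u, Aeq Δ (σ X) u ∧ a ∉ atmsF u
  | .atom b => by intro σ s' _ _ _ X hX; simp at hX
  | .var π Y => by
    intro σ s' h hs hl X hX
    simp only [unknF_var, Finset.mem_singleton] at hX
    subst hX
    simp only [subst_var] at h
    simp only [atmsF_var] at hl
    have hπa : (π : Atom → Atom) a = a := by
      by_contra hc; exact hl (FinPerm.mem_nontriv.mpr hc)
    refine ⟨permAct π.inv s', ?_, ?_⟩
    · have := (h.symm').perm π.inv
      rwa [permAct_inv_cancel] at this
    · exact atmsF_permAct_not π.inv (FinPerm.inv_a_eq hπa) hs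
  | .abs c t => by
    intro σ s' h hs hl X hX
    simp only [unknF_abs] at hX
    simp only [atmsF_abs, Finset.mem_insert, not_or] at hl
    obtain ⟨hac, hat⟩ := hl
    simp only [subst_abs] at h
    cases h with
    | absSame h' =>
      rename_i s₀
      exact main_lemma Δ a t σ s₀ h' (by simp at hs; exact hs.2) hat X hX
    | @absDiff b₀ _ s₀ _ hne hf h' =>
      simp only [atmsF_abs, Finset.mem_insert, not_or] at hs
      obtain ⟨hab, has⟩ := hs
      refine main_lemma Δ a t σ (permAct (FinPerm.swap c b₀) s₀) h' ?_ hat X hX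
      exact atmsF_permAct_not _ (by simp [Equiv.swap_apply_of_ne_of_ne hac hab]) has
  | .app f ts => by
    intro σ s' h hs hl X hX
    simp only [subst_app] at h
    cases h with
    | @app _ us₀ _ hlen hall =>
      simp only [unknF_app] at hX
      obtain ⟨t, ht, hXt⟩ := mem_unknLF.mp hX
      obtain ⟨i, hi, rfl⟩ := List.mem_iff_getElem.mp ht
      have hi' : i < us₀.length := by simp at hlen; omega
      have key : (us₀[i], subst σ ts[i]) ∈ us₀.zip (ts.map (subst σ)) := by
        have h1 : (us₀.zip (ts.map (subst σ)))[i]'(by simp; omega) =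
            (us₀[i], (ts.map (subst σ))[i]'(by simp; omega)) := by simp
        rw [List.getElem_map] at h1
        rw [← h1]; exact List.getElem_mem _
      refine main_lemma Δ a ts[i] σ us₀[i] (hall _ key) ?_ ?_ X hXt
      · simp only [atmsF_app] at hs
        exact fun hc => hs (mem_atmsLF.mpr ⟨us₀[i], List.getElem_mem hi', hc⟩)
      · simp only [atmsF_app] at hl
        exact fun hc => hl (mem_atmsLF.mpr ⟨ts[i], List.getElem_mem hi, hc⟩)
decreasing_by
  all_goals simp_wf
  all_goals first
    | omega
    | (have := List.sizeOf_lt_of_mem (List.getElem_mem hi); omega)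



/-- If `a ∉ atms(s') ∪ atms(l)` and `Δ ⊢ s' ≈α lσ`, then there is a substitution `σ'` with
`Δ ⊢ σ(X) ≈α σ'(X)` and `a ∉ atms(σ'(X))` for all `X ∈ unkn(l)`. -/
theorem avoid_atom_in_matching (Δ : Ctx) (a : Atom) (s' l : Term) (σ : Subst) (hσ : σ.FinDom)
    (ha : a ∉ atmsF s' ∪ atmsF l) (h : Aeq Δ s' (subst σ l)) :
    ∃ σ' : Subst, σ'.FinDom ∧
      ∀ X ∈ unknF l, Aeq Δ (σ X) (σ' X) ∧ a ∉ atmsF (σ' X) := by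
  classical
  have key := main_lemma Δ a l σ s' h
    (fun hc => ha (Finset.mem_union_left _ hc))
    (fun hc => ha (Finset.mem_union_right _ hc))
  choose u hu1 hu2 using key
  refine ⟨fun X => if hX : X ∈ unknF l then u X hX else .var FinPerm.id X, ?_, ?_⟩
  · apply Set.Finite.subset (unknF l).finite_toSet
    intro X hX
    simp only [Set.mem_setOf_eq] at hX
    by_contra hc
    exact hX (dif_neg hc)
  · intro X hX
    simp only [dif_pos hX]
    exact ⟨hu1 X hX, hu2 X hX⟩
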